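/- For a CDF F on ℝ and α ∈ (0,1), let q₀ = min Q^α(F) be the smallest α-quantile. Then for every a > 0, q₀ − a < min H^α_{a,a}(F) ≤ q₀ + a; consequently lim_{a↓0} min H^α_{a,a}(F) = q₀. -/

import Mathlib

open Set MeasureTheory Filter Topology

/-- If `q₀` is the smallest `α`-quantile of a CDF `F`, then for every `a > 0`,
`q₀ − a < min H^α_{a,a}(F) ≤ q₀ + a`, and hence `min H^α_{a,a}(F) → q₀` as `a ↓ 0`. -/
theorem stmt8 (α q₀ : ℝ) (hα : α ∈ Set.Ioo (0 : ℝ) 1)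
    (F : ℝ → ℝ) (hmono : Monotone F) (h0 : ∀ t, 0 ≤ F t) (h1 : ∀ t, F t ≤ 1)
    (hrc : ∀ x, ContinuousWithinAt F (Set.Ici x) x)
    (hbot : Tendsto F atBot (nhds 0)) (htop : Tendsto F atTop (nhds 1))
    (hq : Function.leftLim F q₀ ≤ α ∧ α ≤ F q₀)
    (hqmin : ∀ x, Function.leftLim F x ≤ α → α ≤ F x → q₀ ≤ x) :
    (∀ a : ℝ, 0 < a →
      q₀ - a < sInf {x : ℝ | α * ∫ t in x..(x + a), (1 - F t)
          = (1 - α) * ∫ t in (x - a)..x, F t} ∧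
      sInf {x : ℝ | α * ∫ t in x..(x + a), (1 - F t)
          = (1 - α) * ∫ t in (x - a)..x, F t} ≤ q₀ + a) ∧
    Tendsto (fun a : ℝ => sInf {x : ℝ | α * ∫ t in x..(x + a), (1 - F t)
        = (1 - α) * ∫ t in (x - a)..x, F t}) (nhdsWithin 0 (Set.Ioi 0)) (nhds q₀) := by
  obtain ⟨hα0, hα1⟩ := hα
  have hFint : ∀ b c : ℝ, IntervalIntegrable F volume b c := fun b c =>
    hmono.intervalIntegrable
  have hGint : ∀ b c : ℝ, IntervalIntegrable (fun t => 1 - F t) volume b c := fun b c =>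
    intervalIntegrable_const.sub (hFint b c)
  -- F t < α for all t < q₀
  have hlt : ∀ t, t < q₀ → F t < α := by
    intro t ht
    by_contra hcon
    push_neg at hcon
    set S : Set ℝ := {s | α ≤ F s} with hS
    have hne : S.Nonempty := ⟨t, hcon⟩
    have hbdd : BddBelow S := by
      have : ∀ᶠ s in atBot, F s < α := hbot.eventually_lt_const hα0
      obtain ⟨c, hc⟩ := eventually_atBot.1 this
      exact ⟨c, fun s hs => le_of_not_gt fun hsc => absurd (hc s hsc.le) (not_lt.2 hs)⟩
    set x := sInf S with hx
    have hup : ∀ y, x < y → α ≤ F y := by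
      intro y hy
      obtain ⟨s, hsS, hsy⟩ := exists_lt_of_csInf_lt hne hy
      exact hsS.trans (hmono hsy.le)
    have hFx : α ≤ F x := by
      have htd : Tendsto F (𝓝[>] x) (𝓝 (F x)) :=
        (hrc x).tendsto.mono_left (nhdsWithin_mono x Ioi_subset_Ici_self)
      exact ge_of_tendsto htd (eventually_nhdsWithin_of_forall fun y hy => hup y hy)
    have hLx : Function.leftLim F x ≤ α := by
      have htd := hmono.tendsto_leftLim x
      refine le_of_tendsto htd (eventually_nhdsWithin_of_forall fun s hs => ?_)
      have : s ∉ S := notMem_of_lt_csInf hs hbdd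
      exact (not_le.1 this).le
    have hq₀x : q₀ ≤ x := hqmin x hLx hFx
    have hxt : x ≤ t := csInf_le hbdd hcon
    linarith
  -- the main estimate for each fixed a > 0
  have main : ∀ a : ℝ, 0 < a →
      q₀ - a < sInf {x : ℝ | α * ∫ t in x..(x + a), (1 - F t)
          = (1 - α) * ∫ t in (x - a)..x, F t} ∧
      sInf {x : ℝ | α * ∫ t in x..(x + a), (1 - F t)
          = (1 - α) * ∫ t in (x - a)..x, F t} ≤ q₀ + a := by
    intro a ha
    set G : ℝ → ℝ := fun u =>
      (1 - α) * (∫ t in (u - a)..u, F t) - α * (∫ t in u..(u + a), (1 - F t)) with hGdef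
    have hSeq : {x : ℝ | α * ∫ t in x..(x + a), (1 - F t)
        = (1 - α) * ∫ t in (x - a)..x, F t} = {x : ℝ | G x = 0} := by
      ext x
      simp only [mem_setOf_eq, hGdef, sub_eq_zero]
      exact comm
    rw [hSeq]
    -- continuity of G
    have hprimF := intervalIntegral.continuous_primitive hFint 0
    have hprimG := intervalIntegral.continuous_primitive hGint 0
    have hcont1 : Continuous fun u : ℝ => ∫ t in (u - a)..u, F t := by
      have heq : (fun u : ℝ => ∫ t in (u - a)..u, F t)
          = fun u : ℝ => (∫ t in (0:ℝ)..u, F t) - ∫ t in (0:ℝ)..(u - a), F t := by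
        funext u
        rw [intervalIntegral.integral_interval_sub_left (hFint 0 u) (hFint 0 (u - a))]
      rw [heq]
      exact hprimF.sub (hprimF.comp (continuous_id.sub continuous_const))
    have hcont2 : Continuous fun u : ℝ => ∫ t in u..(u + a), (1 - F t) := by
      have heq : (fun u : ℝ => ∫ t in u..(u + a), (1 - F t))
          = fun u : ℝ => (∫ t in (0:ℝ)..(u + a), (1 - F t)) - ∫ t in (0:ℝ)..u, (1 - F t) := by
        funext u
        rw [intervalIntegral.integral_interval_sub_left (hGint 0 (u + a)) (hGint 0 u)]
      rw [heq]
      exact (hprimG.comp (continuous_id.add continuous_const)).sub hprimG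
    have hGcont : Continuous G :=
      (continuous_const.mul hcont1).sub (continuous_const.mul hcont2)
    -- monotonicity of G
    have hI1mono : Monotone fun u : ℝ => ∫ t in (u - a)..u, F t := by
      intro u v huv
      have h1 := intervalIntegral.integral_add_adjacent_intervals (hFint (u - a) u) (hFint u v)
      have h2 := intervalIntegral.integral_add_adjacent_intervals
        (hFint (u - a) (v - a)) (hFint (v - a) v)
      have hshift : (∫ t in (u - a)..(v - a), F t) = ∫ t in u..v, F (t - a) := by
        rw [intervalIntegral.integral_comp_sub_right F a]
      have hmono' : Monotone fun t : ℝ => F (t - a) :=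
        fun s t hst => hmono (sub_le_sub_right hst a)
      have hle : (∫ t in u..v, F (t - a)) ≤ ∫ t in u..v, F t :=
        intervalIntegral.integral_mono_on huv hmono'.intervalIntegrable (hFint u v)
          (fun x _ => hmono (by linarith))
      simp only []
      linarith
    have hI2anti : Antitone fun u : ℝ => ∫ t in u..(u + a), (1 - F t) := by
      intro u v huv
      have h1 := intervalIntegral.integral_add_adjacent_intervals (hGint u v) (hGint v (v + a))
      have h2 := intervalIntegral.integral_add_adjacent_intervals
        (hGint u (u + a)) (hGint (u + a) (v + a))
      have hshift : (∫ t in (u + a)..(v + a), (1 - F t)) = ∫ t in u..v, (1 - F (t + a)) := by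
        rw [intervalIntegral.integral_comp_add_right (fun t => 1 - F t) a]
      have hle : (∫ t in u..v, (1 - F (t + a))) ≤ ∫ t in u..v, (1 - F t) := by
        refine intervalIntegral.integral_mono_on huv ?_ (hGint u v) (fun x _ => by
          have := hmono (by linarith : x ≤ x + a); linarith)
        have : Antitone fun t : ℝ => 1 - F (t + a) :=
          fun s t hst => by have := hmono (by linarith : s + a ≤ t + a); simp only; linarith
        exact this.intervalIntegrable
      simp only []
      linarith
    have hGmono : Monotone G := by
      intro u v huv
      have h1 := hI1mono huv
      have h2 := hI2anti huv
      simp only [hGdef]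
      have e1 : (1 - α) * (∫ t in (u - a)..u, F t) ≤ (1 - α) * ∫ t in (v - a)..v, F t :=
        mul_le_mul_of_nonneg_left h1 (by linarith)
      have e2 : α * (∫ t in v..(v + a), (1 - F t)) ≤ α * ∫ t in u..(u + a), (1 - F t) :=
        mul_le_mul_of_nonneg_left h2 hα0.le
      linarith
    -- G (q₀ - a) < 0
    have hGneg : G (q₀ - a) < 0 := by
      have hFlt : F (q₀ - a) < α := hlt _ (by linarith)
      have hI1le : (∫ t in (q₀ - a - a)..(q₀ - a), F t) ≤ F (q₀ - a) * a := by
        have := intervalIntegral.integral_mono_on (by linarith : q₀ - a - a ≤ q₀ - a)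
          (hFint _ _) intervalIntegrable_const (g := fun _ => F (q₀ - a))
          (fun x hx => hmono hx.2)
        rwa [intervalIntegral.integral_const, smul_eq_mul,
          show q₀ - a - (q₀ - a - a) = a by ring, mul_comm] at this
      have hI2ge : (1 - α) * a ≤ ∫ t in (q₀ - a)..q₀, (1 - F t) := by
        have hae : (fun _ : ℝ => (1 - α)) ≤ᵐ[volume.restrict (Icc (q₀ - a) q₀)]
            fun t => 1 - F t := by
          have hne : ∀ᵐ t ∂(volume.restrict (Icc (q₀ - a) q₀)), t ≠ q₀ := by
            apply ae_restrict_of_ae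
            rw [ae_iff]
            simp only [not_not, setOf_eq_eq_singleton]
            exact measure_singleton q₀
          have hmem := ae_restrict_mem (μ := volume) (measurableSet_Icc (a := q₀ - a) (b := q₀))
          filter_upwards [hne, hmem] with t ht htm
          have : t < q₀ := lt_of_le_of_ne htm.2 ht
          have := hlt t this
          show (1:ℝ) - α ≤ 1 - F t
          linarith
        have := intervalIntegral.integral_mono_ae_restrict (by linarith : q₀ - a ≤ q₀)
          intervalIntegrable_const (hGint _ _) hae
        rwa [intervalIntegral.integral_const, smul_eq_mul,
          show q₀ - (q₀ - a) = a by ring, mul_comm] at this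
      simp only [hGdef]
      rw [show q₀ - a + a = q₀ by ring]
      nlinarith [mul_le_mul_of_nonneg_left hI1le (by linarith : (0:ℝ) ≤ 1 - α),
        mul_le_mul_of_nonneg_left hI2ge hα0.le,
        mul_pos (mul_pos (by linarith : (0:ℝ) < 1 - α) ha) (sub_pos.2 hFlt)]
    -- 0 ≤ G (q₀ + a)
    have hGpos : 0 ≤ G (q₀ + a) := by
      have hI1ge : α * a ≤ ∫ t in (q₀ + a - a)..(q₀ + a), F t := by
        have := intervalIntegral.integral_mono_on (by linarith : q₀ + a - a ≤ q₀ + a)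
          intervalIntegrable_const (hFint _ _) (f := fun _ => α)
          (fun x hx => le_trans hq.2 (hmono (by linarith [hx.1])))
        rwa [intervalIntegral.integral_const, smul_eq_mul,
          show q₀ + a - (q₀ + a - a) = a by ring, mul_comm] at this
      have hI2le : (∫ t in (q₀ + a)..(q₀ + a + a), (1 - F t)) ≤ (1 - α) * a := by
        have := intervalIntegral.integral_mono_on (by linarith : q₀ + a ≤ q₀ + a + a)
          (hGint _ _) intervalIntegrable_const (g := fun _ => (1 - α))
          (fun x hx => by
            have : α ≤ F x := le_trans hq.2 (hmono (by linarith [hx.1]))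
            show (1:ℝ) - F x ≤ 1 - α
            linarith)
        rwa [intervalIntegral.integral_const, smul_eq_mul,
          show q₀ + a + a - (q₀ + a) = a by ring, mul_comm] at this
      simp only [hGdef]
      nlinarith [mul_le_mul_of_nonneg_left hI1ge (by linarith : (0:ℝ) ≤ 1 - α),
        mul_le_mul_of_nonneg_left hI2le hα0.le]
    -- IVT gives a zero in [q₀ - a, q₀ + a]
    obtain ⟨x, hxmem, hGx⟩ := intermediate_value_Icc (by linarith : q₀ - a ≤ q₀ + a)
      hGcont.continuousOn ⟨hGneg.le, hGpos⟩
    set Z : Set ℝ := {x : ℝ | G x = 0} with hZ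
    have hZne : Z.Nonempty := ⟨x, hGx⟩
    have hZlb : ∀ y ∈ Z, q₀ - a < y := by
      intro y hy
      by_contra hcon
      push_neg at hcon
      have : G y ≤ G (q₀ - a) := hGmono hcon
      rw [hy] at this
      linarith
    have hZbdd : BddBelow Z := ⟨q₀ - a, fun y hy => (hZlb y hy).le⟩
    have hZclosed : IsClosed Z := isClosed_eq hGcont continuous_const
    have hmemInf : sInf Z ∈ Z := hZclosed.csInf_mem hZne hZbdd
    exact ⟨hZlb _ hmemInf, le_trans (csInf_le hZbdd hGx) hxmem.2⟩
  refine ⟨main, ?_⟩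
  have hlo : Tendsto (fun a : ℝ => q₀ - a) (𝓝[>] (0:ℝ)) (𝓝 q₀) := by
    have : Tendsto (fun a : ℝ => q₀ - a) (𝓝 (0:ℝ)) (𝓝 (q₀ - 0)) :=
      (continuous_const.sub continuous_id).tendsto 0
    rw [sub_zero] at this
    exact this.mono_left nhdsWithin_le_nhds
  have hhi : Tendsto (fun a : ℝ => q₀ + a) (𝓝[>] (0:ℝ)) (𝓝 q₀) := by
    have : Tendsto (fun a : ℝ => q₀ + a) (𝓝 (0:ℝ)) (𝓝 (q₀ + 0)) :=
      (continuous_const.add continuous_id).tendsto 0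
    rw [add_zero] at this
    exact this.mono_left nhdsWithin_le_nhds
  refine tendsto_of_tendsto_of_tendsto_of_le_of_le' hlo hhi ?_ ?_
  · filter_upwards [self_mem_nhdsWithin] with a ha
    exact (main a ha).1.le
  · filter_upwards [self_mem_nhdsWithin] with a ha
    exact (main a ha).2
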